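/- In the symmetric group on 6 letters {0, 1, 2, 3, 4, 5} (Equiv.Perm (Fin 6)), the subgroup generated by the four permutations given in cycle notation by (0 3)(1 4)(2 5), (1 2), (3 4), and (4 5) has order 72. -/

import Mathlib

set_option maxRecDepth 8000

open Equiv

private def g1 : Perm (Fin 6) := c[0, 3] * c[1, 4] * c[2, 5]
private def g2 : Perm (Fin 6) := c[1, 2]
private def g3 : Perm (Fin 6) := c[3, 4]
private def g4 : Perm (Fin 6) := c[4, 5]

private def Sset : Set (Perm (Fin 6)) := {g1, g2, g3, g4}

/-- The 72 elements of the generated group, as words in the generators. -/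
private def L : List (Perm (Fin 6)) := [
  1,
  g1,
  g2,
  g3,
  g4,
  g1 * g2,
  g1 * g3,
  g1 * g4,
  g2 * g3,
  g2 * g4,
  g3 * g1,
  g3 * g4,
  g4 * g3,
  g1 * g2 * g3,
  g1 * g2 * g4,
  g1 * g3 * g1,
  g1 * g3 * g4,
  g1 * g4 * g3,
  g2 * g3 * g1,
  g2 * g3 * g4,
  g2 * g4 * g3,
  g3 * g1 * g2,
  g3 * g1 * g3,
  g3 * g4 * g3,
  g4 * g3 * g1,
  g1 * g2 * g3 * g1,
  g1 * g2 * g3 * g4,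
  g1 * g2 * g4 * g3,
  g1 * g3 * g1 * g2,
  g1 * g3 * g1 * g3,
  g1 * g3 * g4 * g3,
  g1 * g4 * g3 * g1,
  g2 * g3 * g1 * g2,
  g2 * g3 * g1 * g3,
  g2 * g3 * g4 * g3,
  g2 * g4 * g3 * g1,
  g3 * g1 * g2 * g3,
  g3 * g1 * g3 * g4,
  g3 * g4 * g3 * g1,
  g4 * g3 * g1 * g3,
  g1 * g2 * g3 * g1 * g2,
  g1 * g2 * g3 * g1 * g3,
  g1 * g2 * g3 * g4 * g3,
  g1 * g2 * g4 * g3 * g1,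
  g1 * g3 * g1 * g2 * g3,
  g1 * g3 * g1 * g3 * g4,
  g1 * g3 * g4 * g3 * g1,
  g1 * g4 * g3 * g1 * g3,
  g2 * g3 * g1 * g2 * g3,
  g2 * g3 * g1 * g3 * g4,
  g2 * g3 * g4 * g3 * g1,
  g2 * g4 * g3 * g1 * g3,
  g3 * g1 * g2 * g3 * g4,
  g3 * g4 * g3 * g1 * g3,
  g4 * g3 * g1 * g3 * g4,
  g1 * g2 * g3 * g1 * g2 * g3,
  g1 * g2 * g3 * g1 * g3 * g4,
  g1 * g2 * g3 * g4 * g3 * g1,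
  g1 * g2 * g4 * g3 * g1 * g3,
  g1 * g3 * g1 * g2 * g3 * g4,
  g1 * g3 * g4 * g3 * g1 * g3,
  g1 * g4 * g3 * g1 * g3 * g4,
  g2 * g3 * g1 * g2 * g3 * g4,
  g2 * g3 * g4 * g3 * g1 * g3,
  g2 * g4 * g3 * g1 * g3 * g4,
  g3 * g4 * g3 * g1 * g3 * g4,
  g1 * g2 * g3 * g1 * g2 * g3 * g4,
  g1 * g2 * g3 * g4 * g3 * g1 * g3,
  g1 * g2 * g4 * g3 * g1 * g3 * g4,
  g1 * g3 * g4 * g3 * g1 * g3 * g4,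
  g2 * g3 * g4 * g3 * g1 * g3 * g4,
  g1 * g2 * g3 * g4 * g3 * g1 * g3 * g4]

private def code (s : Perm (Fin 6)) : ℕ :=
  (s 0).val + 6 * (s 1).val + 36 * (s 2).val + 216 * (s 3).val +
    1296 * (s 4).val + 7776 * (s 5).val

private def encL : List ℕ := [44790, 17055, 44760, 43710, 38310, 17025, 15975, 10575, 43680, 38280, 17050, 30750, 36150, 15945, 10545, 44785, 3015, 8415, 10570, 30720, 36120, 16990, 15970, 29670, 17015, 38305, 2985, 8385, 44725, 43705, 1935, 44750, 10510, 8410, 29640, 10535, 15910, 3010, 16985, 15935, 38245, 36145, 1905, 38270, 43645, 30745, 44720, 43670, 8350, 1930, 10505, 8375, 2950, 15905, 2975, 36085, 29665, 38240, 36110, 30685, 43640, 30710, 1870, 8345, 1895, 2945, 29605, 36080, 29630, 30680, 1865, 29600]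

private lemma hmap : L.map code = encL := by decide

private lemma hnodupL : L.Nodup :=
  List.Nodup.of_map code (hmap ▸ (by decide : encL.Nodup))

private lemma hlen : L.length = 72 := rfl

private lemma mem_L_closure : ∀ x ∈ L, x ∈ Subgroup.closure Sset := by
  have h1 : g1 ∈ Subgroup.closure Sset := Subgroup.subset_closure (Set.mem_insert _ _)
  have h2 : g2 ∈ Subgroup.closure Sset := Subgroup.subset_closure
    (Set.mem_insert_of_mem _ (Set.mem_insert _ _))
  have h3 : g3 ∈ Subgroup.closure Sset := Subgroup.subset_closure
    (Set.mem_insert_of_mem _ (Set.mem_insert_of_mem _ (Set.mem_insert _ _)))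
  have h4 : g4 ∈ Subgroup.closure Sset := Subgroup.subset_closure
    (Set.mem_insert_of_mem _ (Set.mem_insert_of_mem _ (Set.mem_insert_of_mem _ rfl)))
  exact List.forall_mem_cons.2 ⟨Subgroup.one_mem _,
    List.forall_mem_cons.2 ⟨h1,
    List.forall_mem_cons.2 ⟨h2,
    List.forall_mem_cons.2 ⟨h3,
    List.forall_mem_cons.2 ⟨h4,
    List.forall_mem_cons.2 ⟨(mul_mem h1 h2),
    List.forall_mem_cons.2 ⟨(mul_mem h1 h3),
    List.forall_mem_cons.2 ⟨(mul_mem h1 h4),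
    List.forall_mem_cons.2 ⟨(mul_mem h2 h3),
    List.forall_mem_cons.2 ⟨(mul_mem h2 h4),
    List.forall_mem_cons.2 ⟨(mul_mem h3 h1),
    List.forall_mem_cons.2 ⟨(mul_mem h3 h4),
    List.forall_mem_cons.2 ⟨(mul_mem h4 h3),
    List.forall_mem_cons.2 ⟨(mul_mem (mul_mem h1 h2) h3),
    List.forall_mem_cons.2 ⟨(mul_mem (mul_mem h1 h2) h4),
    List.forall_mem_cons.2 ⟨(mul_mem (mul_mem h1 h3) h1),
    List.forall_mem_cons.2 ⟨(mul_mem (mul_mem h1 h3) h4),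
    List.forall_mem_cons.2 ⟨(mul_mem (mul_mem h1 h4) h3),
    List.forall_mem_cons.2 ⟨(mul_mem (mul_mem h2 h3) h1),
    List.forall_mem_cons.2 ⟨(mul_mem (mul_mem h2 h3) h4),
    List.forall_mem_cons.2 ⟨(mul_mem (mul_mem h2 h4) h3),
    List.forall_mem_cons.2 ⟨(mul_mem (mul_mem h3 h1) h2),
    List.forall_mem_cons.2 ⟨(mul_mem (mul_mem h3 h1) h3),
    List.forall_mem_cons.2 ⟨(mul_mem (mul_mem h3 h4) h3),
    List.forall_mem_cons.2 ⟨(mul_mem (mul_mem h4 h3) h1),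
    List.forall_mem_cons.2 ⟨(mul_mem (mul_mem (mul_mem h1 h2) h3) h1),
    List.forall_mem_cons.2 ⟨(mul_mem (mul_mem (mul_mem h1 h2) h3) h4),
    List.forall_mem_cons.2 ⟨(mul_mem (mul_mem (mul_mem h1 h2) h4) h3),
    List.forall_mem_cons.2 ⟨(mul_mem (mul_mem (mul_mem h1 h3) h1) h2),
    List.forall_mem_cons.2 ⟨(mul_mem (mul_mem (mul_mem h1 h3) h1) h3),
    List.forall_mem_cons.2 ⟨(mul_mem (mul_mem (mul_mem h1 h3) h4) h3),
    List.forall_mem_cons.2 ⟨(mul_mem (mul_mem (mul_mem h1 h4) h3) h1),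
    List.forall_mem_cons.2 ⟨(mul_mem (mul_mem (mul_mem h2 h3) h1) h2),
    List.forall_mem_cons.2 ⟨(mul_mem (mul_mem (mul_mem h2 h3) h1) h3),
    List.forall_mem_cons.2 ⟨(mul_mem (mul_mem (mul_mem h2 h3) h4) h3),
    List.forall_mem_cons.2 ⟨(mul_mem (mul_mem (mul_mem h2 h4) h3) h1),
    List.forall_mem_cons.2 ⟨(mul_mem (mul_mem (mul_mem h3 h1) h2) h3),
    List.forall_mem_cons.2 ⟨(mul_mem (mul_mem (mul_mem h3 h1) h3) h4),
    List.forall_mem_cons.2 ⟨(mul_mem (mul_mem (mul_mem h3 h4) h3) h1),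
    List.forall_mem_cons.2 ⟨(mul_mem (mul_mem (mul_mem h4 h3) h1) h3),
    List.forall_mem_cons.2 ⟨(mul_mem (mul_mem (mul_mem (mul_mem h1 h2) h3) h1) h2),
    List.forall_mem_cons.2 ⟨(mul_mem (mul_mem (mul_mem (mul_mem h1 h2) h3) h1) h3),
    List.forall_mem_cons.2 ⟨(mul_mem (mul_mem (mul_mem (mul_mem h1 h2) h3) h4) h3),
    List.forall_mem_cons.2 ⟨(mul_mem (mul_mem (mul_mem (mul_mem h1 h2) h4) h3) h1),
    List.forall_mem_cons.2 ⟨(mul_mem (mul_mem (mul_mem (mul_mem h1 h3) h1) h2) h3),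
    List.forall_mem_cons.2 ⟨(mul_mem (mul_mem (mul_mem (mul_mem h1 h3) h1) h3) h4),
    List.forall_mem_cons.2 ⟨(mul_mem (mul_mem (mul_mem (mul_mem h1 h3) h4) h3) h1),
    List.forall_mem_cons.2 ⟨(mul_mem (mul_mem (mul_mem (mul_mem h1 h4) h3) h1) h3),
    List.forall_mem_cons.2 ⟨(mul_mem (mul_mem (mul_mem (mul_mem h2 h3) h1) h2) h3),
    List.forall_mem_cons.2 ⟨(mul_mem (mul_mem (mul_mem (mul_mem h2 h3) h1) h3) h4),
    List.forall_mem_cons.2 ⟨(mul_mem (mul_mem (mul_mem (mul_mem h2 h3) h4) h3) h1),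
    List.forall_mem_cons.2 ⟨(mul_mem (mul_mem (mul_mem (mul_mem h2 h4) h3) h1) h3),
    List.forall_mem_cons.2 ⟨(mul_mem (mul_mem (mul_mem (mul_mem h3 h1) h2) h3) h4),
    List.forall_mem_cons.2 ⟨(mul_mem (mul_mem (mul_mem (mul_mem h3 h4) h3) h1) h3),
    List.forall_mem_cons.2 ⟨(mul_mem (mul_mem (mul_mem (mul_mem h4 h3) h1) h3) h4),
    List.forall_mem_cons.2 ⟨(mul_mem (mul_mem (mul_mem (mul_mem (mul_mem h1 h2) h3) h1) h2) h3),
    List.forall_mem_cons.2 ⟨(mul_mem (mul_mem (mul_mem (mul_mem (mul_mem h1 h2) h3) h1) h3) h4),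
    List.forall_mem_cons.2 ⟨(mul_mem (mul_mem (mul_mem (mul_mem (mul_mem h1 h2) h3) h4) h3) h1),
    List.forall_mem_cons.2 ⟨(mul_mem (mul_mem (mul_mem (mul_mem (mul_mem h1 h2) h4) h3) h1) h3),
    List.forall_mem_cons.2 ⟨(mul_mem (mul_mem (mul_mem (mul_mem (mul_mem h1 h3) h1) h2) h3) h4),
    List.forall_mem_cons.2 ⟨(mul_mem (mul_mem (mul_mem (mul_mem (mul_mem h1 h3) h4) h3) h1) h3),
    List.forall_mem_cons.2 ⟨(mul_mem (mul_mem (mul_mem (mul_mem (mul_mem h1 h4) h3) h1) h3) h4),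
    List.forall_mem_cons.2 ⟨(mul_mem (mul_mem (mul_mem (mul_mem (mul_mem h2 h3) h1) h2) h3) h4),
    List.forall_mem_cons.2 ⟨(mul_mem (mul_mem (mul_mem (mul_mem (mul_mem h2 h3) h4) h3) h1) h3),
    List.forall_mem_cons.2 ⟨(mul_mem (mul_mem (mul_mem (mul_mem (mul_mem h2 h4) h3) h1) h3) h4),
    List.forall_mem_cons.2 ⟨(mul_mem (mul_mem (mul_mem (mul_mem (mul_mem h3 h4) h3) h1) h3) h4),
    List.forall_mem_cons.2 ⟨(mul_mem (mul_mem (mul_mem (mul_mem (mul_mem (mul_mem h1 h2) h3) h1) h2) h3) h4),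
    List.forall_mem_cons.2 ⟨(mul_mem (mul_mem (mul_mem (mul_mem (mul_mem (mul_mem h1 h2) h3) h4) h3) h1) h3),
    List.forall_mem_cons.2 ⟨(mul_mem (mul_mem (mul_mem (mul_mem (mul_mem (mul_mem h1 h2) h4) h3) h1) h3) h4),
    List.forall_mem_cons.2 ⟨(mul_mem (mul_mem (mul_mem (mul_mem (mul_mem (mul_mem h1 h3) h4) h3) h1) h3) h4),
    List.forall_mem_cons.2 ⟨(mul_mem (mul_mem (mul_mem (mul_mem (mul_mem (mul_mem h2 h3) h4) h3) h1) h3) h4),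
    List.forall_mem_cons.2 ⟨(mul_mem (mul_mem (mul_mem (mul_mem (mul_mem (mul_mem (mul_mem h1 h2) h3) h4) h3) h1) h3) h4),
    List.forall_mem_nil _⟩⟩⟩⟩⟩⟩⟩⟩⟩⟩⟩⟩⟩⟩⟩⟩⟩⟩⟩⟩⟩⟩⟩⟩⟩⟩⟩⟩⟩⟩⟩⟩⟩⟩⟩⟩⟩⟩⟩⟩⟩⟩⟩⟩⟩⟩⟩⟩⟩⟩⟩⟩⟩⟩⟩⟩⟩⟩⟩⟩⟩⟩⟩⟩⟩⟩⟩⟩⟩⟩⟩⟩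

/-! ### Upper bound: the block stabilizer -/

private def d (i : Fin 6) : Bool := decide ((i : ℕ) < 3)

private def H : Subgroup (Perm (Fin 6)) where
  carrier := {s | ∀ i j, d i = d j ↔ d (s i) = d (s j)}
  one_mem' := fun i j => Iff.rfl
  mul_mem' := fun {a b} ha hb i j => (hb i j).trans (ha (b i) (b j))
  inv_mem' := fun {s} hs i j => by
    have := (hs (s⁻¹ i) (s⁻¹ j)).symm
    simpa using this

private lemma closure_le_H : Subgroup.closure Sset ≤ H := by
  refine (Subgroup.closure_le H).2 ?_
  intro x hx
  rcases hx with rfl | rfl | rfl | rfl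
  · exact (by decide : ∀ i j, d i = d j ↔ d (g1 i) = d (g1 j))
  · exact (by decide : ∀ i j, d i = d j ↔ d (g2 i) = d (g2 j))
  · exact (by decide : ∀ i j, d i = d j ↔ d (g3 i) = d (g3 j))
  · exact (by decide : ∀ i j, d i = d j ↔ d (g4 i) = d (g4 j))

private def f3 (j : Fin 6) : Fin 3 := ⟨j.val % 3, Nat.mod_lt _ (by norm_num)⟩

private def emb (c : Bool) (i : Fin 3) : Fin 6 :=
  if c then ⟨i.val, Nat.lt_of_lt_of_le i.isLt (by norm_num)⟩
  else ⟨i.val + 3, by have := i.isLt; omega⟩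

private lemma demb : ∀ (c : Bool) (i : Fin 3), d (emb c i) = c := by decide

private lemma sep_lemma : ∀ j k : Fin 6, d j = d k → f3 j = f3 k → j = k := by decide

private lemma emb_f3 : ∀ x : Fin 6, emb (d x) (f3 x) = x := by decide

private lemma bool_key : ∀ p q q' r s : Bool,
    ((true = p) ↔ (q = r)) → ((true = p) ↔ (q' = s)) → q = q' → r = s := by decide

private def ψ (s : H) : Bool × {f : Fin 3 → Fin 3 // Function.Injective f} ×
    {f : Fin 3 → Fin 3 // Function.Injective f} :=
  ⟨d (s.1 0),
   ⟨fun i => f3 (s.1 (emb true i)), by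
      intro i j hij
      have hd : d (s.1 (emb true i)) = d (s.1 (emb true j)) :=
        (s.2 (emb true i) (emb true j)).1 (by rw [demb, demb])
      have := sep_lemma _ _ hd hij
      have h2 := s.1.injective this
      have : emb true i = emb true j := h2
      simpa [emb, Fin.ext_iff] using this⟩,
   ⟨fun i => f3 (s.1 (emb false i)), by
      intro i j hij
      have hd : d (s.1 (emb false i)) = d (s.1 (emb false j)) :=
        (s.2 (emb false i) (emb false j)).1 (by rw [demb, demb])
      have := sep_lemma _ _ hd hij
      have h2 := s.1.injective this
      have : emb false i = emb false j := h2
      simpa [emb, Fin.ext_iff] using this⟩⟩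

private lemma ψ_inj : Function.Injective ψ := by
  rintro ⟨σ, hσ⟩ ⟨τ, hτ⟩ h
  have hc := congrArg Prod.fst h
  have ha := congrArg (fun z => z.2.1) h
  have hb := congrArg (fun z => z.2.2) h
  have ha' : ∀ i, f3 (σ (emb true i)) = f3 (τ (emb true i)) :=
    fun i => congrFun (congrArg Subtype.val ha) i
  have hb' : ∀ i, f3 (σ (emb false i)) = f3 (τ (emb false i)) :=
    fun i => congrFun (congrArg Subtype.val hb) i
  have hc' : d (σ 0) = d (τ 0) := hc
  apply Subtype.ext
  apply Equiv.ext
  intro x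
  have hdx : d (σ x) = d (τ x) := by
    have h1 := hσ 0 x
    have h2 := hτ 0 x
    have hd0 : d (0 : Fin 6) = true := by decide
    rw [hd0] at h1 h2
    exact bool_key (d x) (d (σ 0)) (d (τ 0)) (d (σ x)) (d (τ x)) h1 h2 hc'
  have hfx : f3 (σ x) = f3 (τ x) := by
    rcases hdxv : d x with hfalse | htrue
    · have : emb false (f3 x) = x := by rw [← hdxv]; exact emb_f3 x
      rw [← this]; exact hb' (f3 x)
    · have : emb true (f3 x) = x := by rw [← hdxv]; exact emb_f3 x
      rw [← this]; exact ha' (f3 x)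
  exact sep_lemma _ _ hdx hfx

private lemma card_H_le : Nat.card H ≤ 72 := by
  have h := Nat.card_le_card_of_injective ψ ψ_inj
  have : Nat.card (Bool × {f : Fin 3 → Fin 3 // Function.Injective f} ×
      {f : Fin 3 → Fin 3 // Function.Injective f}) = 72 := by
    rw [Nat.card_eq_fintype_card]
    decide
  omega

/-! ### Main theorem -/

/-- the subgroup of S₆ generated by (0 3)(1 4)(2 5), (1 2), (3 4) and (4 5)
(the fixed group of a Humbert component of discriminant Δ ≡ 1 mod 8, Δ ≠ 1) has order 72. -/
theorem humbert_fixed_group_one_mod_eight_order :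
    Nat.card (Subgroup.closure
      ({c[0, 3] * c[1, 4] * c[2, 5], c[1, 2], c[3, 4], c[4, 5]} :
        Set (Equiv.Perm (Fin 6)))) = 72 := by
  show Nat.card (Subgroup.closure Sset) = 72
  have hle : Nat.card (Subgroup.closure Sset) ≤ 72 :=
    le_trans (Subgroup.card_le_of_le closure_le_H) card_H_le
  have hge : 72 ≤ Nat.card (Subgroup.closure Sset) := by
    have hf : Function.Injective (fun i : Fin 72 =>
        (⟨L.get (Fin.cast hlen.symm i), mem_L_closure _ (L.get_mem _)⟩ :
          Subgroup.closure Sset)) := by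
      intro i j hij
      have := List.nodup_iff_injective_get.1 hnodupL (Subtype.ext_iff.1 hij)
      exact Fin.cast_injective _ this
    have := Nat.card_le_card_of_injective _ hf
    simpa using this
  omega
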